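/- Let $\silting$ be a silting collection in a triangulated category $\mathcal{D}$, $t$ its associated silting t-structure, and $w$ the induced weight structure on $\mathcal{C} = \mathrm{thick}(\silting)$ (with $\mathcal{C}_{w\leq 0}$ the Karoubi closure of the extension closure of $\{P[m] : P \in \silting, m \geq 0\}$ and $\mathcal{C}_{w\geq 0}$ of $\{P[m] : P \in \silting, m \leq 0\}$). Then $w$ is w-t-strictly left orthogonal to $t$: $\mathcal{C}_{w\geq 0} = {}^{\perp}(\mathcal{D}^{t<0}) \cap \mathcal{C}$, $\mathcal{C}_{w\leq 0} = {}^{\perp}(\mathcal{D}^{t>0}) \cap \mathcal{C}$, $\mathcal{D}^{t<0} = (\mathcal{C}_{w\geq 0})^{\perp}$, and $\mathcal{D}^{t>0} = (\mathcal{C}_{w\leq 0})^{\perp}$. -/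

import Mathlib

open CategoryTheory Limits Pretriangulated

namespace Paper

universe v u

variable {C : Type u} [Category.{v} C] [Preadditive C] [HasZeroObject C]
  [HasShift C ℤ] [∀ n : ℤ, (shiftFunctor C n).Additive] [Pretriangulated C]

open CategoryTheory.Triangulated

/-- The right perpendicular of a class of objects. -/
def rPerp (T : Set C) : Set C := {Y | ∀ X ∈ T, ∀ f : X ⟶ Y, f = 0}

/-- The left perpendicular of a class of objects. -/
def lPerp (T : Set C) : Set C := {X | ∀ Y ∈ T, ∀ f : X ⟶ Y, f = 0}

/-- `S^{⊥_{>0}}`. -/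
def perpGT (S : Set C) : Set C := {X | ∀ P ∈ S, ∀ m : ℤ, 0 < m → ∀ f : P ⟶ X⟦m⟧, f = 0}

/-- `S^{⊥_{<0}}`. -/
def perpLT (S : Set C) : Set C := {X | ∀ P ∈ S, ∀ m : ℤ, m < 0 → ∀ f : P ⟶ X⟦m⟧, f = 0}

/-- The pair `(S^{⊥_{>0}}, S^{⊥_{<0}})` is the t-structure `t`. -/
def IsSiltingTStructureFor (S : Set C) (t : TStructure C) : Prop :=
  (∀ X : C, t.le 0 X ↔ X ∈ perpGT S) ∧ (∀ X : C, t.ge 0 X ↔ X ∈ perpLT S)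

/-- `X` is a retract (direct summand) of `Y`. -/
def IsRetractOf (X Y : C) : Prop := ∃ (i : X ⟶ Y) (r : Y ⟶ X), i ≫ r = 𝟙 X


/-- An indecomposable object: nonzero, and not a nontrivial biproduct. -/
def IndecObj {A : Type*} [Category A] [Limits.HasZeroMorphisms A]
    [HasBinaryBiproducts A] (X : A) : Prop :=
  ¬ IsZero X ∧ ∀ Y Z : A, Nonempty (X ≅ Y ⊞ Z) → IsZero Y ∨ IsZero Z

section Biprod
variable [HasFiniteBiproducts C]

/-- The Karoubi closure: direct summands of finite coproducts of objects of `S`. -/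
def Kar (S : Set C) : Set C :=
  {X | ∃ (n : ℕ) (f : Fin n → C), (∀ i, f i ∈ S) ∧ IsRetractOf X (⨁ f)}

/-- A class of objects is Krull–Schmidt: every object is a finite biproduct of
objects of the class with local endomorphism rings. -/
def KrullSchmidtOn (T : Set C) : Prop :=
  ∀ X ∈ T, ∃ (n : ℕ) (f : Fin n → C),
    (∀ i, f i ∈ T ∧ IsLocalRing (End (f i))) ∧ Nonempty (X ≅ ⨁ f)

/-- The category `C` is Krull–Schmidt. -/
def IsKrullSchmidt : Prop :=
  ∀ X : C, ∃ (n : ℕ) (f : Fin n → C),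
    (∀ i, IsLocalRing (End (f i))) ∧ Nonempty (X ≅ ⨁ f)

/-- A silting collection: pairwise non-isomorphic indecomposables whose Karoubi
closure is Krull–Schmidt, such that the perpendicular pair is the t-structure `t`. -/
structure IsSiltingCollection (S : Set C) (t : TStructure C) : Prop where
  indec : ∀ P ∈ S, IndecObj P
  pairwise_noniso : ∀ P ∈ S, ∀ Q ∈ S, P ≠ Q → IsEmpty (P ≅ Q)
  kar_ks : KrullSchmidtOn (Kar S)
  tstr : IsSiltingTStructureFor S t

end Biprod

/-- Derived projective objects with respect to a t-structure. -/
def IsDerivedProjective (t : TStructure C) (P : C) : Prop :=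
  t.le 0 P ∧ ∀ (X : C), t.le 0 X → ∀ f : P ⟶ X⟦(1 : ℤ)⟧, f = 0

/-- The heart of a t-structure, as a class of objects. -/
def heartSet (t : TStructure C) : Set C := {X | t.le 0 X ∧ t.ge 0 X}

/-- The heart of a t-structure, as a full subcategory. -/
abbrev Heart (t : TStructure C) := ObjectProperty.FullSubcategory (heartSet t)

instance (t : TStructure C) : Category (Heart t) := ObjectProperty.FullSubcategory.category _

instance (P : C → Prop) : Preadditive (ObjectProperty.FullSubcategory P) where
  homGroup X Y := (InducedCategory.homEquiv (X := X) (Y := Y)).addCommGroup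
  add_comp _ _ _ f f' g := by ext; apply Preadditive.add_comp
  comp_add _ _ _ f g g' := by ext; apply Preadditive.comp_add

/-- Truncation data for a t-structure: the truncation functors `t_{≤0}` (right adjoint
to the inclusion of `D^{t≤0}`), `t_{≥0}` (left adjoint to the inclusion of `D^{t≥0}`),
and the zeroth cohomology functor `H = t_{≤0} ∘ t_{≥0}`. -/
structure TruncationData (t : TStructure C) where
  /-- the zeroth cohomology functor -/
  H : C ⥤ C
  H_heart : ∀ X : C, H.obj X ∈ heartSet t
  τle : C ⥤ C
  τleCounit : τle ⟶ 𝟭 C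
  τle_mem : ∀ X : C, t.le 0 (τle.obj X)
  τle_fac : ∀ (X Z : C), t.le 0 Z → ∀ f : Z ⟶ X,
    ∃! g : Z ⟶ τle.obj X, g ≫ τleCounit.app X = f
  τge : C ⥤ C
  τgeUnit : 𝟭 C ⟶ τge
  τge_mem : ∀ X : C, t.ge 0 (τge.obj X)
  τge_fac : ∀ (X Z : C), t.ge 0 Z → ∀ f : X ⟶ Z,
    ∃! g : τge.obj X ⟶ Z, τgeUnit.app X ≫ g = f
  H_eq : H = τge ⋙ τle

/-- The zeroth cohomology functor, valued in the heart. -/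
def TruncationData.Hh {t : TStructure C} (TD : TruncationData t) : C ⥤ Heart t :=
  ObjectProperty.lift _ TD.H TD.H_heart

/-- A projective cover: an essential epimorphism from a projective object. -/
def IsProjectiveCover {A : Type*} [Category A] {P X : A} (π : P ⟶ X) : Prop :=
  Projective P ∧ Epi π ∧ ∀ (R : A) (g : R ⟶ P), Epi (g ≫ π) → Epi g

/-- A derived projective cover of `X`. -/
def IsDerivedProjectiveCover {t : TStructure C} (TD : TruncationData t)
    {P X : C} (π : P ⟶ X) : Prop :=
  IsDerivedProjective t P ∧ IsProjectiveCover (TD.Hh.map π)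

/-- A t-structure is non-degenerate. -/
def NonDegenerate (t : TStructure C) : Prop :=
  (∀ X : C, (∀ n : ℤ, t.le n X) → IsZero X) ∧ (∀ X : C, (∀ n : ℤ, t.ge n X) → IsZero X)

/-- An object of a category has finite length: bounded chains of subobjects. -/
def FiniteLengthObj {A : Type*} [Category A] (X : A) : Prop :=
  ∃ n : ℕ, ∀ s : Fin (n + 1) → Subobject X, ¬ StrictMono s

/-- `D` has derived projectives: every projective of the heart is `H⁰` of a
derived projective. -/
def HasDerivedProjectives {t : TStructure C} (TD : TruncationData t) : Prop :=
  ∀ Q : Heart t, Projective Q → ∃ P : C, IsDerivedProjective t P ∧ Nonempty (TD.Hh.obj P ≅ Q)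

/-- `D` has enough derived projectives. -/
def HasEnoughDerivedProjectives {t : TStructure C} (TD : TruncationData t) : Prop :=
  EnoughProjectives (Heart t) ∧ HasDerivedProjectives TD

/-- The extension closure of a class of objects. -/
inductive ExtClos (T : Set C) : C → Prop
  | of {X : C} : X ∈ T → ExtClos T X
  | zero {X : C} : IsZero X → ExtClos T X
  | ext {A E B : C} (f : A ⟶ E) (g : E ⟶ B) (h : B ⟶ A⟦(1 : ℤ)⟧) :
      Triangle.mk f g h ∈ (distTriang C) → ExtClos T A → ExtClos T B → ExtClos T E

/-- The Karoubi (retract) closure of a class of objects. -/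
def KarClos (T : Set C) : Set C := {X | ∃ Y ∈ T, IsRetractOf X Y}

/-- The triangulated subcategory generated by a class of objects. -/
inductive TriaClos (T : Set C) : C → Prop
  | of {X : C} : X ∈ T → TriaClos T X
  | zero {X : C} : IsZero X → TriaClos T X
  | shift {X : C} (n : ℤ) : TriaClos T X → TriaClos T (X⟦n⟧)
  | ext {A E B : C} (f : A ⟶ E) (g : E ⟶ B) (h : B ⟶ A⟦(1 : ℤ)⟧) :
      Triangle.mk f g h ∈ (distTriang C) → TriaClos T A → TriaClos T B → TriaClos T E

/-- The thick subcategory generated by a class of objects. -/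
inductive ThickClos (T : Set C) : C → Prop
  | of {X : C} : X ∈ T → ThickClos T X
  | zero {X : C} : IsZero X → ThickClos T X
  | shift {X : C} (n : ℤ) : ThickClos T X → ThickClos T (X⟦n⟧)
  | ext {A E B : C} (f : A ⟶ E) (g : E ⟶ B) (h : B ⟶ A⟦(1 : ℤ)⟧) :
      Triangle.mk f g h ∈ (distTriang C) → ThickClos T A → ThickClos T B → ThickClos T E
  | retract {X Y : C} : IsRetractOf X Y → ThickClos T Y → ThickClos T X

/-- A thick subcategory, as a class of objects. -/
structure IsThickSet (T : Set C) : Prop where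
  zero : ∀ X : C, IsZero X → X ∈ T
  shift : ∀ X ∈ T, ∀ n : ℤ, X⟦n⟧ ∈ T
  ext : ∀ (A E B : C) (f : A ⟶ E) (g : E ⟶ B) (h : B ⟶ A⟦(1 : ℤ)⟧),
    Triangle.mk f g h ∈ (distTriang C) → A ∈ T → B ∈ T → E ∈ T
  retract : ∀ X Y : C, IsRetractOf X Y → Y ∈ T → X ∈ T

/-- A weight structure on the subcategory of `C` given by the class `CC`. -/
structure WeightStructureOn (CC : Set C) where
  le : Set C
  ge : Set C
  le_sub : le ⊆ CC
  ge_sub : ge ⊆ CC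
  le_iso : ∀ X Y : C, (X ≅ Y) → X ∈ le → Y ∈ le
  ge_iso : ∀ X Y : C, (X ≅ Y) → X ∈ ge → Y ∈ ge
  le_retract : ∀ X Y : C, IsRetractOf X Y → Y ∈ le → X ∈ le
  ge_retract : ∀ X Y : C, IsRetractOf X Y → Y ∈ ge → X ∈ ge
  le_shift : ∀ X ∈ le, X⟦(1 : ℤ)⟧ ∈ le
  ge_shift : ∀ X ∈ ge, X⟦(-1 : ℤ)⟧ ∈ ge
  orth : ∀ X : C, X⟦(1 : ℤ)⟧ ∈ ge → ∀ Y ∈ le, ∀ f : X ⟶ Y, f = 0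
  decomp : ∀ X ∈ CC, ∃ (A B : C) (f : A ⟶ X) (g : X ⟶ B) (h : B ⟶ A⟦(1 : ℤ)⟧),
    Triangle.mk f g h ∈ (distTriang C) ∧ A⟦(1 : ℤ)⟧ ∈ ge ∧ B ∈ le

namespace WeightStructureOn

variable {CC : Set C} (w : WeightStructureOn CC)

/-- `C_{w>0}`. -/
def gt : Set C := {X | X⟦(1 : ℤ)⟧ ∈ w.ge}

/-- `C_{w<0}`. -/
def lt : Set C := {X | X⟦(-1 : ℤ)⟧ ∈ w.le}

end WeightStructureOn


section Infra

set_option linter.unusedSectionVars false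

/-- All homs from `X` to `Y` vanish. -/
def NoHom (X Y : C) : Prop := ∀ f : X ⟶ Y, f = 0

lemma NoHom.src_iso {X X' Y : C} (e : X ≅ X') (h : NoHom X' Y) : NoHom X Y := fun f => by
  have : f = e.hom ≫ (e.inv ≫ f) := by rw [Iso.hom_inv_id_assoc]
  rw [this, h (e.inv ≫ f), comp_zero]

lemma NoHom.tgt_iso {X Y' Y : C} (e : Y' ≅ Y) (h : NoHom X Y') : NoHom X Y := fun f => by
  have : f = (f ≫ e.inv) ≫ e.hom := by simp
  rw [this, h (f ≫ e.inv), zero_comp]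

lemma NoHom.shift {X Y : C} (n : ℤ) (h : NoHom X Y) : NoHom (X⟦n⟧) (Y⟦n⟧) := fun f => by
  obtain ⟨g, rfl⟩ := (shiftFunctor C n).map_surjective f
  rw [h g, Functor.map_zero]

lemma NoHom.of_retract {X X' Y : C} (h : IsRetractOf X X') (hn : NoHom X' Y) : NoHom X Y := by
  obtain ⟨i, r, hir⟩ := h
  intro f
  have : f = i ≫ (r ≫ f) := by rw [← Category.assoc, hir, Category.id_comp]
  rw [this, hn (r ≫ f), comp_zero]

lemma NoHom.of_src_zero {X Y : C} (h : IsZero X) : NoHom X Y := fun f => h.eq_of_src f 0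

lemma NoHom.of_tgt_zero {X Y : C} (h : IsZero Y) : NoHom X Y := fun f => h.eq_of_tgt f 0

variable (S : Set C)

/-- shifts of the silting objects, from `⟦b⟧` upwards, kill `Z`. -/
def UU (b : ℤ) : Set C := {Z | ∀ Q ∈ S, ∀ t : ℤ, t < b → NoHom (Q⟦t⟧) Z}

/-- shifts of the silting objects, from `⟦b⟧` downwards, kill `Z`. -/
def DD (b : ℤ) : Set C := {Z | ∀ Q ∈ S, ∀ t : ℤ, b ≤ t → NoHom (Q⟦t⟧) Z}

/-- `Z` kills everything in `UU S b`. -/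
def VV (b : ℤ) : Set C := {Z | ∀ Y ∈ UU S b, NoHom Z Y}

variable {S}

lemma UU_mono {b b' : ℤ} (h : b' ≤ b) : UU S b ⊆ UU S b' :=
  fun _ hZ Q hQ t ht => hZ Q hQ t (by omega)

lemma UU_iso {X Z : C} (e : X ≅ Z) (hZ : Z ∈ UU S b) : X ∈ UU S b :=
  fun Q hQ t ht => (hZ Q hQ t ht).tgt_iso e.symm

lemma UU_shift {Z : C} {b : ℤ} (hZ : Z ∈ UU S b) (n : ℤ) : Z⟦n⟧ ∈ UU S (b + n) := by
  intro Q hQ t ht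
  exact ((hZ Q hQ (t - n) (by omega)).shift n).src_iso
    ((shiftFunctorAdd' C (t - n) n t (by omega)).app Q)

lemma UU_zero {Z : C} (h : IsZero Z) (b : ℤ) : Z ∈ UU S b :=
  fun _ _ _ _ => NoHom.of_tgt_zero h

lemma UU_ext {A E B : C} (f : A ⟶ E) (g : E ⟶ B) (h : B ⟶ A⟦(1 : ℤ)⟧)
    (mem : Triangle.mk f g h ∈ distTriang C) {b : ℤ}
    (hA : A ∈ UU S b) (hB : B ∈ UU S b) : E ∈ UU S b := by
  intro Q hQ t ht x
  obtain ⟨y, hy⟩ := Triangle.coyoneda_exact₂ _ mem x (by exact hB Q hQ t ht (x ≫ g))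
  rw [hy, show y = 0 from hA Q hQ t ht y, zero_comp]; rfl

lemma UU_retract {X Z : C} (h : IsRetractOf X Z) (hZ : Z ∈ UU S b) : X ∈ UU S b := by
  obtain ⟨i, r, hir⟩ := h
  intro Q hQ t ht f
  have : f = (f ≫ i) ≫ r := by rw [Category.assoc, hir, Category.comp_id]
  rw [this, hZ Q hQ t ht (f ≫ i), zero_comp]

lemma DD_iso {X Z : C} (e : X ≅ Z) (hZ : Z ∈ DD S b) : X ∈ DD S b :=
  fun Q hQ t ht => (hZ Q hQ t ht).tgt_iso e.symm

lemma DD_ext {A E B : C} (f : A ⟶ E) (g : E ⟶ B) (h : B ⟶ A⟦(1 : ℤ)⟧)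
    (mem : Triangle.mk f g h ∈ distTriang C) {b : ℤ}
    (hA : A ∈ DD S b) (hB : B ∈ DD S b) : E ∈ DD S b := by
  intro Q hQ t ht x
  obtain ⟨y, hy⟩ := Triangle.coyoneda_exact₂ _ mem x (by exact hB Q hQ t ht (x ≫ g))
  rw [hy, show y = 0 from hA Q hQ t ht y, zero_comp]; rfl

lemma VV_iso {X Z : C} (e : X ≅ Z) (hZ : Z ∈ VV S b) : X ∈ VV S b :=
  fun Y hY => (hZ Y hY).src_iso e

lemma VV_zero {Z : C} (h : IsZero Z) (b : ℤ) : Z ∈ VV S b :=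
  fun _ _ => NoHom.of_src_zero h

lemma VV_shift {Z : C} {b : ℤ} (hZ : Z ∈ VV S b) (n : ℤ) : Z⟦n⟧ ∈ VV S (b + n) := by
  intro Y hY
  have hY' : Y⟦-n⟧ ∈ UU S b := by
    have := UU_shift hY (-n)
    rwa [show b + n + -n = b by omega] at this
  exact ((hZ _ hY').shift n).tgt_iso ((shiftFunctorCompIsoId C (-n) n (by omega)).app Y)

lemma VV_ext {A E B : C} (f : A ⟶ E) (g : E ⟶ B) (h : B ⟶ A⟦(1 : ℤ)⟧)
    (mem : Triangle.mk f g h ∈ distTriang C) {b : ℤ}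
    (hA : A ∈ VV S b) (hB : B ∈ VV S b) : E ∈ VV S b := by
  intro Y hY x
  obtain ⟨y, hy⟩ := Triangle.yoneda_exact₂ _ mem x (by exact hA Y hY (f ≫ x))
  rw [hy, show y = 0 from hB Y hY y, comp_zero]; rfl


section Tools

lemma coyoneda_exact₅ {T : Triangle C} (hT : T ∈ distTriang C) {X : C}
    (f : X ⟶ T.obj₂⟦(1 : ℤ)⟧) (hf : f ≫ T.mor₂⟦(1 : ℤ)⟧' = 0) :
    ∃ g : X ⟶ T.obj₁⟦(1 : ℤ)⟧, f = g ≫ T.mor₁⟦(1 : ℤ)⟧' := by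
  obtain ⟨g, hg⟩ := Triangle.coyoneda_exact₁ _ (rot_of_distTriang _ hT) f hf
  refine ⟨-g, by rw [hg]; simp [Triangle.rotate]; exact (Preadditive.comp_neg _ _).trans (Preadditive.neg_comp _ _).symm⟩

lemma yoneda_exact₄ {T : Triangle C} (hT : T ∈ distTriang C) {Y : C}
    (f : T.obj₁⟦(1 : ℤ)⟧ ⟶ Y) (hf : T.mor₃ ≫ f = 0) :
    ∃ g : T.obj₂⟦(1 : ℤ)⟧ ⟶ Y, f = T.mor₁⟦(1 : ℤ)⟧' ≫ g := by
  obtain ⟨g, hg⟩ := Triangle.yoneda_exact₂ _ (rot_of_distTriang _ (rot_of_distTriang _ hT)) f hf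
  refine ⟨-g, by rw [hg]; simp [Triangle.rotate]; exact (Preadditive.neg_comp _ _).trans (Preadditive.comp_neg _ _).symm⟩

lemma yoneda_exact₅ {T : Triangle C} (hT : T ∈ distTriang C) {Y : C}
    (f : T.obj₂⟦(1 : ℤ)⟧ ⟶ Y) (hf : T.mor₁⟦(1 : ℤ)⟧' ≫ f = 0) :
    ∃ g : T.obj₃⟦(1 : ℤ)⟧ ⟶ Y, f = T.mor₂⟦(1 : ℤ)⟧' ≫ g := by
  obtain ⟨g, hg⟩ := Triangle.yoneda_exact₂ _
    (rot_of_distTriang _ (rot_of_distTriang _ (rot_of_distTriang _ hT))) f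
    (by simp [Triangle.rotate, hf]; exact (Preadditive.neg_comp _ _).trans (neg_eq_zero.mpr hf))
  refine ⟨-g, by rw [hg]; simp [Triangle.rotate]; exact (Preadditive.neg_comp _ _).trans (Preadditive.comp_neg _ _).symm⟩

end Tools

section Wrappers

variable {A E B X Y : C} {f : A ⟶ E} {g : E ⟶ B} {h : B ⟶ A⟦(1 : ℤ)⟧}

lemma zc₁₂ (mem : Triangle.mk f g h ∈ distTriang C) : f ≫ g = 0 :=
  comp_distTriang_mor_zero₁₂ _ mem

lemma zc₂₃ (mem : Triangle.mk f g h ∈ distTriang C) : g ≫ h = 0 :=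
  comp_distTriang_mor_zero₂₃ _ mem

lemma zc₃₁ (mem : Triangle.mk f g h ∈ distTriang C) : h ≫ f⟦(1 : ℤ)⟧' = 0 :=
  comp_distTriang_mor_zero₃₁ _ mem

lemma cye₁ (mem : Triangle.mk f g h ∈ distTriang C) (x : X ⟶ A⟦(1 : ℤ)⟧)
    (hx : x ≫ f⟦(1 : ℤ)⟧' = 0) : ∃ u : X ⟶ B, x = u ≫ h :=
  Triangle.coyoneda_exact₁ _ mem x hx

lemma cye₂ (mem : Triangle.mk f g h ∈ distTriang C) (x : X ⟶ E)
    (hx : x ≫ g = 0) : ∃ u : X ⟶ A, x = u ≫ f :=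
  Triangle.coyoneda_exact₂ _ mem x hx

lemma cye₃ (mem : Triangle.mk f g h ∈ distTriang C) (x : X ⟶ B)
    (hx : x ≫ h = 0) : ∃ u : X ⟶ E, x = u ≫ g :=
  Triangle.coyoneda_exact₃ _ mem x hx

lemma cye₅ (mem : Triangle.mk f g h ∈ distTriang C) (x : X ⟶ E⟦(1 : ℤ)⟧)
    (hx : x ≫ g⟦(1 : ℤ)⟧' = 0) : ∃ u : X ⟶ A⟦(1 : ℤ)⟧, x = u ≫ f⟦(1 : ℤ)⟧' :=
  coyoneda_exact₅ mem x hx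

lemma ye₂ (mem : Triangle.mk f g h ∈ distTriang C) (x : E ⟶ Y)
    (hx : f ≫ x = 0) : ∃ u : B ⟶ Y, x = g ≫ u :=
  Triangle.yoneda_exact₂ _ mem x hx

lemma ye₃ (mem : Triangle.mk f g h ∈ distTriang C) (x : B ⟶ Y)
    (hx : g ≫ x = 0) : ∃ u : A⟦(1 : ℤ)⟧ ⟶ Y, x = h ≫ u :=
  Triangle.yoneda_exact₃ _ mem x hx

lemma ye₄ (mem : Triangle.mk f g h ∈ distTriang C) (x : A⟦(1 : ℤ)⟧ ⟶ Y)
    (hx : h ≫ x = 0) : ∃ u : E⟦(1 : ℤ)⟧ ⟶ Y, x = f⟦(1 : ℤ)⟧' ≫ u :=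
  yoneda_exact₄ mem x hx

lemma ye₅ (mem : Triangle.mk f g h ∈ distTriang C) (x : E⟦(1 : ℤ)⟧ ⟶ Y)
    (hx : f⟦(1 : ℤ)⟧' ≫ x = 0) : ∃ u : B⟦(1 : ℤ)⟧ ⟶ Y, x = g⟦(1 : ℤ)⟧' ≫ u :=
  yoneda_exact₅ mem x hx

lemma cdm₂ {A' E' B' : C} {f' : A' ⟶ E'} {g' : E' ⟶ B'} {h' : B' ⟶ A'⟦(1 : ℤ)⟧}
    (mem : Triangle.mk f g h ∈ distTriang C)
    (mem' : Triangle.mk f' g' h' ∈ distTriang C)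
    (a : A ⟶ A') (c : B ⟶ B') (comm : h ≫ a⟦(1 : ℤ)⟧' = c ≫ h') :
    ∃ b : E ⟶ E', f ≫ b = a ≫ f' ∧ g ≫ c = b ≫ g' :=
  complete_distinguished_triangle_morphism₂ _ _ mem mem' a c comm

end Wrappers

section Gens

variable (S : Set C)

/-- generators of weights `≥ -a` -/
def Gle (a : ℤ) : Set C := {X | ∃ P ∈ S, ∃ m : ℤ, m ≤ a ∧ Nonempty (X ≅ P⟦m⟧)}

/-- generators of weights `≤ -a` -/
def Gge (a : ℤ) : Set C := {X | ∃ P ∈ S, ∃ m : ℤ, a ≤ m ∧ Nonempty (X ≅ P⟦m⟧)}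

/-- all shifted generators -/
def GAll : Set C := {X | ∃ P ∈ S, ∃ m : ℤ, Nonempty (X ≅ P⟦m⟧)}

variable {S}

lemma extClos_ind {G P : Set C} (hzero : ∀ Z : C, IsZero Z → Z ∈ P)
    (hext : ∀ (A E B : C) (f : A ⟶ E) (g : E ⟶ B) (h : B ⟶ A⟦(1 : ℤ)⟧),
      (Triangle.mk f g h ∈ distTriang C) → A ∈ P → B ∈ P → E ∈ P)
    (hG : G ⊆ P) {X : C} (hX : ExtClos G X) : X ∈ P := by
  induction hX with
  | of h => exact hG h
  | zero h => exact hzero _ h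
  | ext f g h mem _ _ ihA ihB => exact hext _ _ _ f g h mem ihA ihB

/-- O1: objects of `ExtClos (Gle S a)` admit no nonzero maps to `UU S (a+1)`. -/
lemma extGle_mem_VV {a : ℤ} {Z : C} (hZ : ExtClos (Gle S a) Z) : Z ∈ VV S (a + 1) := by
  refine extClos_ind (fun Z h => VV_zero h _) (fun A E B f g h mem hA hB => VV_ext f g h mem hA hB)
    ?_ hZ
  rintro X ⟨P, hP, m, hm, ⟨e⟩⟩
  exact VV_iso e (fun Y hY => hY P hP m (by omega))

/-- O2: objects of `ExtClos (Gge S b)` admit no nonzero maps to `DD S b`. -/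
lemma extGge_noHom {b : ℤ} {Z Y : C} (hZ : ExtClos (Gge S b) Z) (hY : Y ∈ DD S b) :
    NoHom Z Y := by
  refine extClos_ind (P := {Z : C | NoHom Z Y}) (fun Z h => NoHom.of_src_zero h)
    (fun A E B f g h mem hA hB x => ?_) ?_ hZ
  · obtain ⟨y, hy⟩ := Triangle.yoneda_exact₂ _ mem x (by exact hA (f ≫ x))
    rw [hy, show y = 0 from hB y, comp_zero]; rfl
  · rintro X ⟨P, hP, m, hm, ⟨e⟩⟩
    exact (hY P hP m hm).src_iso e

variable {t : TStructure C}

lemma LE_iff (hS : IsSiltingTStructureFor S t) {n m : ℤ} (hnm : n + m = 0) (Y : C) :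
    t.le n Y ↔ Y ∈ UU S m := by
  constructor
  · intro h Q hQ τ hτ
    have h1 : t.le 0 (Y⟦n⟧) := t.le_shift n n 0 (by omega) Y h
    have h2 := (hS.1 _).1 h1
    have h3 : NoHom Q ((Y⟦n⟧)⟦-τ - n⟧) := fun f => h2 Q hQ (-τ - n) (by omega) f
    have h4 : NoHom Q (Y⟦-τ⟧) :=
      h3.tgt_iso ((shiftFunctorAdd' C n (-τ - n) (-τ) (by omega)).symm.app Y)
    exact (h4.shift τ).src_iso (Iso.refl _) |>.tgt_iso
      ((shiftFunctorCompIsoId C (-τ) τ (by omega)).app Y)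
  · intro h
    have h1 : t.le 0 (Y⟦n⟧) := by
      refine (hS.1 _).2 ?_
      intro P hP k hk f
      have h2 : NoHom (P⟦-(n + k)⟧) Y := h P hP _ (by omega)
      have h4 : NoHom P (Y⟦n + k⟧) :=
        (h2.shift (n + k)).src_iso
          ((shiftFunctorCompIsoId C (-(n + k)) (n + k) (by omega)).symm.app P)
      have h5 : NoHom P ((Y⟦n⟧)⟦k⟧) :=
        h4.tgt_iso ((shiftFunctorAdd' C n k (n + k) rfl).app Y)
      exact h5 f
    have h6 := t.le_shift 0 (-n) n (by omega) _ h1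
    exact ((t.le n).prop_iff_of_iso ((shiftFunctorCompIsoId C n (-n) (by omega)).app Y)).1 h6

lemma GE_iff (hS : IsSiltingTStructureFor S t) {n m : ℤ} (hnm : n + m = 1) (Y : C) :
    t.ge n Y ↔ Y ∈ DD S m := by
  constructor
  · intro h Q hQ τ hτ
    have h1 : t.ge 0 (Y⟦n⟧) := t.ge_shift n n 0 (by omega) Y h
    have h2 := (hS.2 _).1 h1
    have h3 : NoHom Q ((Y⟦n⟧)⟦-τ - n⟧) := fun f => h2 Q hQ (-τ - n) (by omega) f
    have h4 : NoHom Q (Y⟦-τ⟧) :=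
      h3.tgt_iso ((shiftFunctorAdd' C n (-τ - n) (-τ) (by omega)).symm.app Y)
    exact (h4.shift τ).tgt_iso ((shiftFunctorCompIsoId C (-τ) τ (by omega)).app Y)
  · intro h
    have h1 : t.ge 0 (Y⟦n⟧) := by
      refine (hS.2 _).2 ?_
      intro P hP k hk f
      have h2 : NoHom (P⟦-(n + k)⟧) Y := h P hP _ (by omega)
      have h4 : NoHom P (Y⟦n + k⟧) :=
        (h2.shift (n + k)).src_iso
          ((shiftFunctorCompIsoId C (-(n + k)) (n + k) (by omega)).symm.app P)
      have h5 : NoHom P ((Y⟦n⟧)⟦k⟧) :=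
        h4.tgt_iso ((shiftFunctorAdd' C n k (n + k) rfl).app Y)
      exact h5 f
    have h6 := t.ge_shift 0 (-n) n (by omega) _ h1
    exact ((t.ge n).prop_iff_of_iso ((shiftFunctorCompIsoId C n (-n) (by omega)).app Y)).1 h6

/-- the silting objects have no positive self-extensions. -/
lemma gen_mem_UU (hS : IsSiltingTStructureFor S t) {P : C} (hP : P ∈ S) : P ∈ UU S 0 := by
  obtain ⟨A, B, hA, hB, f, g, h, mem⟩ := t.exists_triangle P 0 1 rfl
  have hBD : B ∈ DD S 0 := (GE_iff hS (by omega) B).1 hB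
  have hg : g = 0 := ((hBD P hP 0 le_rfl).src_iso ((shiftFunctorZero C ℤ).symm.app P)) g
  obtain ⟨s, hs⟩ := Triangle.coyoneda_exact₂ _ mem (𝟙 P) (by exact (Category.id_comp g).trans hg)
  exact UU_retract ⟨s, f, hs.symm⟩ ((LE_iff hS (by omega) A).1 hA)

lemma genGe_mem_UU (hS : IsSiltingTStructureFor S t) {P : C} {m b : ℤ}
    (hP : P ∈ S) (hmb : b ≤ m) : P⟦m⟧ ∈ UU S b := by
  have := UU_shift (gen_mem_UU hS hP) m
  rw [zero_add] at this
  exact UU_mono hmb this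

lemma extGge_mem_UU (hS : IsSiltingTStructureFor S t) {b : ℤ} {Z : C}
    (hZ : ExtClos (Gge S b) Z) : Z ∈ UU S b := by
  refine extClos_ind (fun Z h => UU_zero h _) (fun A E B f g h mem hA hB => UU_ext f g h mem hA hB)
    ?_ hZ
  rintro X ⟨P, hP, m, hm, ⟨e⟩⟩
  exact UU_iso e (genGe_mem_UU hS hP hm)

lemma extClos_GAll_shift {X : C} (hX : ExtClos (GAll S) X) (n : ℤ) :
    ExtClos (GAll S) (X⟦n⟧) := by
  induction hX with
  | of h =>
      obtain ⟨P, hP, m, ⟨e⟩⟩ := h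
      exact ExtClos.of ⟨P, hP, m + n,
        ⟨(shiftFunctor C n).mapIso e ≪≫ ((shiftFunctorAdd' C m n (m + n) rfl).symm.app P)⟩⟩
  | zero h => exact ExtClos.zero ((shiftFunctor C n).map_isZero h)
  | ext f g h mem hA hB ihA ihB =>
      exact ExtClos.ext _ _ _ (Triangle.shift_distinguished _ mem n) ihA ihB

end Gens

section Reduction

lemma ext_of_retracts {X₁ X₂ E Y₁ Y₂ : C}
    (f : X₁ ⟶ E) (g : E ⟶ X₂) (h : X₂ ⟶ X₁⟦(1 : ℤ)⟧)
    (mem : Triangle.mk f g h ∈ distTriang C)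
    (h₁ : IsRetractOf X₁ Y₁) (h₂ : IsRetractOf X₂ Y₂) :
    ∃ (E' : C) (f' : Y₁ ⟶ E') (g' : E' ⟶ Y₂) (h' : Y₂ ⟶ Y₁⟦(1 : ℤ)⟧),
      (Triangle.mk f' g' h' ∈ distTriang C) ∧ IsRetractOf E E' := by
  obtain ⟨i₁, r₁, hir₁⟩ := h₁
  obtain ⟨i₂, r₂, hir₂⟩ := h₂
  obtain ⟨E', f', g', mem'⟩ := distinguished_cocone_triangle₂ (r₂ ≫ h ≫ i₁⟦(1 : ℤ)⟧')
  obtain ⟨j₀, hj₁, hj₂⟩ : ∃ b : E ⟶ E', f ≫ b = i₁ ≫ f' ∧ g ≫ i₂ = b ≫ g' := complete_distinguished_triangle_morphism₂ _ _ mem mem' i₁ i₂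
    (by show h ≫ i₁⟦(1 : ℤ)⟧' = i₂ ≫ (r₂ ≫ h ≫ i₁⟦(1 : ℤ)⟧')
        rw [← Category.assoc, hir₂, Category.id_comp])
  obtain ⟨q₀, hq₁, hq₂⟩ : ∃ b : E' ⟶ E, f' ≫ b = r₁ ≫ f ∧ g' ≫ r₂ = b ≫ g := complete_distinguished_triangle_morphism₂ _ _ mem' mem r₁ r₂
    (by show (r₂ ≫ h ≫ i₁⟦(1 : ℤ)⟧') ≫ r₁⟦(1 : ℤ)⟧' = r₂ ≫ h
        rw [Category.assoc, Category.assoc, ← Functor.map_comp, hir₁,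
          CategoryTheory.Functor.map_id, Category.comp_id])
  have j : E ⟶ E' := j₀
  have q : E' ⟶ E := q₀
  replace hj₁ : f ≫ j₀ = i₁ ≫ f' := hj₁
  replace hj₂ : g ≫ i₂ = j₀ ≫ g' := hj₂
  replace hq₁ : f' ≫ q₀ = r₁ ≫ f := hq₁
  replace hq₂ : g' ≫ r₂ = q₀ ≫ g := hq₂
  have hjq : (j₀ ≫ q₀ : E ⟶ E) = j₀ ≫ q₀ := rfl
  set n : E ⟶ E := 𝟙 E - (j₀ ≫ q₀ : E ⟶ E) with hn
  have hm₂ : ((j₀ ≫ q₀ : E ⟶ E)) ≫ g = g := by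
    rw [Category.assoc, ← hq₂, ← Category.assoc, ← hj₂, Category.assoc, hir₂, Category.comp_id]
  have hm₁ : f ≫ ((j₀ ≫ q₀ : E ⟶ E)) = f := by
    rw [← Category.assoc, hj₁, Category.assoc, hq₁, ← Category.assoc, hir₁, Category.id_comp]
  have hng : n ≫ g = 0 := by
    rw [hn, Preadditive.sub_comp, Category.id_comp, hm₂, sub_self]
  obtain ⟨s, hs⟩ : ∃ s : E ⟶ X₁, n = s ≫ f := Triangle.coyoneda_exact₂ _ mem n (by exact hng)
  have hfn : f ≫ n = 0 := by
    rw [hn, Preadditive.comp_sub, Category.comp_id, hm₁, sub_self]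
  have hnn : n ≫ n = 0 := by
    nth_rewrite 1 [hs]
    rw [Category.assoc]
    change s ≫ f ≫ n = 0
    rw [hfn, comp_zero]
  refine ⟨E', f', g', r₂ ≫ h ≫ i₁⟦(1 : ℤ)⟧', mem', j₀, q₀ ≫ (𝟙 E + n), ?_⟩
  have key : ((j₀ ≫ q₀ : E ⟶ E)) ≫ (𝟙 E + n) = 𝟙 E := by
    have hjq2 : (j₀ ≫ q₀ : E ⟶ E) = 𝟙 E - n := by rw [hn]; abel
    have h1 : ((j₀ ≫ q₀ : E ⟶ E)) ≫ n = n := by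
      rw [hjq2, Preadditive.sub_comp, Category.id_comp, hnn, sub_zero]
    rw [Preadditive.comp_add, Category.comp_id, h1, hjq2]
    abel
  show j₀ ≫ q₀ ≫ (𝟙 E + n) = 𝟙 E
  rw [← Category.assoc]
  exact key

lemma thick_retract_ext {S : Set C} {X : C} (hX : ThickClos S X) :
    ∃ Y : C, ExtClos (GAll S) Y ∧ IsRetractOf X Y := by
  induction hX with
  | of h =>
      exact ⟨_, ExtClos.of ⟨_, h, 0, ⟨((shiftFunctorZero C ℤ).app _).symm⟩⟩,
        ⟨𝟙 _, 𝟙 _, Category.id_comp _⟩⟩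
  | zero h => exact ⟨_, ExtClos.zero h, ⟨𝟙 _, 𝟙 _, Category.id_comp _⟩⟩
  | shift n _ ih =>
      obtain ⟨Y, hY, i, r, hir⟩ := ih
      exact ⟨Y⟦n⟧, extClos_GAll_shift hY n, i⟦n⟧', r⟦n⟧',
        by rw [← Functor.map_comp, hir, CategoryTheory.Functor.map_id]⟩
  | ext f g h mem _ _ ihA ihB =>
      obtain ⟨Y₁, hY₁, hr₁⟩ := ihA
      obtain ⟨Y₂, hY₂, hr₂⟩ := ihB
      obtain ⟨E', f', g', h', mem', hre⟩ := ext_of_retracts f g h mem hr₁ hr₂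
      exact ⟨E', ExtClos.ext f' g' h' mem' hY₁ hY₂, hre⟩
  | retract hr _ ih =>
      obtain ⟨Y, hY, i, r, hir⟩ := ih
      obtain ⟨i', r', hir'⟩ := hr
      exact ⟨Y, hY, i' ≫ i, r ≫ r',
        by rw [Category.assoc, ← Category.assoc i, hir, Category.id_comp, hir']⟩

end Reduction

section DecompGe

open ZeroObject

variable {S : Set C} {t : TStructure C}

lemma decompGe (hS : IsSiltingTStructureFor S t) {X : C}
    (hX : ExtClos (GAll S) X) (a : ℤ) :
    ∃ (A B : C) (f : A ⟶ X) (g : X ⟶ B) (h : B ⟶ A⟦(1 : ℤ)⟧),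
      (Triangle.mk f g h ∈ distTriang C) ∧ ExtClos (Gle S a) A ∧ B ∈ UU S (a + 1) := by
  induction hX generalizing a with
  | of hgen =>
      rename_i X
      obtain ⟨P, hP, m, ⟨e⟩⟩ := hgen
      by_cases hm : m ≤ a
      · exact ⟨X, 0, 𝟙 X, 0, 0, contractible_distinguished X,
          ExtClos.of ⟨P, hP, m, hm, ⟨e⟩⟩, UU_zero (isZero_zero C) _⟩
      · obtain ⟨W, w0, h0, memW⟩ := distinguished_cocone_triangle₁ (𝟙 X)
        have hW : IsZero W :=
          Triangle.isZero₁_of_isIso₂ _ memW (by exact inferInstanceAs (IsIso (𝟙 X)))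
        exact ⟨W, X, w0, 𝟙 X, h0, memW, ExtClos.zero hW,
          UU_iso e (genGe_mem_UU hS hP (by omega))⟩
  | zero hzero =>
      rename_i X
      exact ⟨X, 0, 𝟙 X, 0, 0, contractible_distinguished X,
        ExtClos.zero hzero, UU_zero (isZero_zero C) _⟩
  | ext f g h mem hA hB ihA ihB =>
      obtain ⟨A₁, A₂, p, q, r, memA, hA₁, hA₂⟩ := ihA a
      obtain ⟨B₁, B₂, i, j, k, memB, hB₁, hB₂⟩ := ihB a
      have horth : NoHom B₁ (A₂⟦(1 : ℤ)⟧) :=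
        extGle_mem_VV hB₁ _ (UU_mono (by omega) (UU_shift hA₂ 1))
      obtain ⟨φ, hφ⟩ := cye₅ memA (i ≫ h) (by exact horth _)
      obtain ⟨E₁, α, β, memE1⟩ := distinguished_cocone_triangle₂ φ
      obtain ⟨ψ, hψ₁, hψ₂⟩ := cdm₂ memE1 mem p i (by rw [← hφ])
      obtain ⟨E₂, π, ρ, memE2⟩ := distinguished_cocone_triangle ψ
      refine ⟨E₁, E₂, ψ, π, ρ, memE2, ExtClos.ext α β φ memE1 hA₁ hB₁, ?_⟩
      intro Q hQ τ hτ x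
      have hWA₂ : NoHom (Q⟦τ⟧) A₂ := hA₂ Q hQ τ hτ
      have hWB₂ : NoHom (Q⟦τ⟧) B₂ := hB₂ Q hQ τ hτ
      have hz : (x ≫ ρ) ≫ ψ⟦(1 : ℤ)⟧' = 0 := by
        rw [Category.assoc, zc₃₁ memE2, comp_zero]
      have hy : (x ≫ ρ) ≫ β⟦(1 : ℤ)⟧' = 0 := by
        have h1 : ((x ≫ ρ) ≫ β⟦(1 : ℤ)⟧') ≫ i⟦(1 : ℤ)⟧' = 0 := by
          rw [Category.assoc, ← Functor.map_comp, hψ₂, Functor.map_comp, ← Category.assoc,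
            hz, zero_comp]
        obtain ⟨c, hc⟩ := cye₁ memB ((x ≫ ρ) ≫ β⟦(1 : ℤ)⟧') h1
        rw [hc, hWB₂ c, zero_comp]
      obtain ⟨d, hd⟩ := cye₅ memE1 (x ≫ ρ) (by exact hy)
      have hd5 : (d ≫ p⟦(1 : ℤ)⟧') ≫ f⟦(1 : ℤ)⟧' = 0 := by
        rw [Category.assoc, ← Functor.map_comp, ← hψ₁, Functor.map_comp, ← Category.assoc,
          ← hd, hz]
      obtain ⟨e', he'⟩ := cye₁ mem (d ≫ p⟦(1 : ℤ)⟧') hd5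
      obtain ⟨f', hf'⟩ := cye₂ memB e' (by exact hWB₂ _)
      have h8 : (d - f' ≫ φ) ≫ p⟦(1 : ℤ)⟧' = 0 := by
        rw [Preadditive.sub_comp, Category.assoc, ← hφ, ← Category.assoc, ← hf', ← he',
          sub_self]
      obtain ⟨c', hc'⟩ := cye₁ memA (d - f' ≫ φ) h8
      have hdφ : d = f' ≫ φ := by
        rw [hWA₂ c', zero_comp] at hc'
        exact sub_eq_zero.mp hc'
      have hzρ : x ≫ ρ = 0 := by
        rw [hd, hdφ, Category.assoc, zc₃₁ memE1, comp_zero]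
      obtain ⟨e, he⟩ := cye₃ memE2 x (by exact hzρ)
      obtain ⟨g', hg'⟩ := cye₂ memB (e ≫ g) (by exact hWB₂ _)
      have h12 : (g' ≫ φ) ≫ p⟦(1 : ℤ)⟧' = 0 := by
        rw [Category.assoc, ← hφ, ← Category.assoc, ← hg', Category.assoc,
          zc₂₃ mem, comp_zero]
      obtain ⟨c₂, hc₂⟩ := cye₁ memA (g' ≫ φ) h12
      have hg'φ : g' ≫ φ = 0 := by rw [hc₂, hWA₂ c₂, zero_comp]
      obtain ⟨z₂, hz₂⟩ := cye₃ memE1 g' (by exact hg'φ)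
      have h14 : (e - z₂ ≫ ψ) ≫ g = 0 := by
        rw [Preadditive.sub_comp, Category.assoc, ← hψ₂, ← Category.assoc, ← hz₂, ← hg',
          sub_self]
      obtain ⟨a', ha'⟩ := cye₂ mem (e - z₂ ≫ ψ) (by exact h14)
      obtain ⟨a₁', ha₁'⟩ := cye₂ memA a' (by exact hWA₂ _)
      have hψπ : ψ ≫ π = 0 := zc₁₂ memE2
      have he2 : e = a₁' ≫ (p ≫ f) + z₂ ≫ ψ := by
        have h15 : e - z₂ ≫ ψ = a₁' ≫ (p ≫ f) := by
          rw [ha', ha₁', Category.assoc]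
        exact sub_eq_iff_eq_add.mp h15
      have hfπ : (p ≫ f) ≫ π = 0 := by rw [← hψ₁, Category.assoc, hψπ, comp_zero]
      rw [he, he2, Preadditive.add_comp, Category.assoc, hfπ, comp_zero,
        Category.assoc, hψπ, comp_zero, add_zero]

end DecompGe

section DecompLe

open ZeroObject

variable {S : Set C} {t : TStructure C}

lemma decompLe (hS : IsSiltingTStructureFor S t) {X : C}
    (hX : ExtClos (GAll S) X) (b : ℤ) :
    ∃ (A B : C) (f : A ⟶ X) (g : X ⟶ B) (h : B ⟶ A⟦(1 : ℤ)⟧),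
      (Triangle.mk f g h ∈ distTriang C) ∧ A ∈ VV S b ∧ ExtClos (Gge S b) B := by
  induction hX generalizing b with
  | of hgen =>
      rename_i X
      obtain ⟨P, hP, m, ⟨e⟩⟩ := hgen
      by_cases hm : m < b
      · exact ⟨X, 0, 𝟙 X, 0, 0, contractible_distinguished X,
          VV_iso e (fun Y hY => hY P hP m (by omega)), ExtClos.zero (isZero_zero C)⟩
      · obtain ⟨W, w0, h0, memW⟩ := distinguished_cocone_triangle₁ (𝟙 X)
        have hW : IsZero W :=
          Triangle.isZero₁_of_isIso₂ _ memW (by exact inferInstanceAs (IsIso (𝟙 X)))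
        exact ⟨W, X, w0, 𝟙 X, h0, memW, VV_zero hW _,
          ExtClos.of ⟨P, hP, m, by omega, ⟨e⟩⟩⟩
  | zero hzero =>
      rename_i X
      exact ⟨X, 0, 𝟙 X, 0, 0, contractible_distinguished X,
        VV_zero hzero _, ExtClos.zero (isZero_zero C)⟩
  | ext f g h mem hA hB ihA ihB =>
      obtain ⟨A₁, A₂, p, q, r, memA, hA₁, hA₂⟩ := ihA b
      obtain ⟨B₁, B₂, i, j, k, memB, hB₁, hB₂⟩ := ihB b
      have horth : NoHom B₁ (A₂⟦(1 : ℤ)⟧) :=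
        hB₁ _ (UU_mono (by omega) (UU_shift (extGge_mem_UU hS hA₂) 1))
      obtain ⟨φ', hφ'⟩ := ye₂ memB (h ≫ q⟦(1 : ℤ)⟧') (by exact horth _)
      obtain ⟨E₂, α₂, β₂, memE2⟩ := distinguished_cocone_triangle₂ φ'
      obtain ⟨ψ', hψ'₁, hψ'₂⟩ := cdm₂ mem memE2 q j (by exact hφ')
      obtain ⟨E₁, ψ₁, ρ', memE1⟩ := distinguished_cocone_triangle₁ ψ'
      refine ⟨E₁, E₂, ψ₁, ψ', ρ', memE1, ?_, ExtClos.ext α₂ β₂ φ' memE2 hA₂ hB₂⟩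
      intro Y hY x
      have hY1 : Y⟦(1 : ℤ)⟧ ∈ UU S (b + 1) := UU_shift hY 1
      have hA₁s : NoHom (A₁⟦(1 : ℤ)⟧) (Y⟦(1 : ℤ)⟧) := (VV_shift hA₁ 1) _ hY1
      have hB₁s : NoHom (B₁⟦(1 : ℤ)⟧) (Y⟦(1 : ℤ)⟧) := (VV_shift hB₁ 1) _ hY1
      suffices hx1 : x⟦(1 : ℤ)⟧' = 0 by
        exact (shiftFunctor C (1 : ℤ)).map_injective (by rw [hx1, Functor.map_zero])
      have hz : ψ' ≫ (ρ' ≫ x⟦(1 : ℤ)⟧') = 0 := by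
        rw [← Category.assoc, zc₂₃ memE1, zero_comp]
      have hy2 : α₂ ≫ (ρ' ≫ x⟦(1 : ℤ)⟧') = 0 := by
        have h1 : q ≫ (α₂ ≫ (ρ' ≫ x⟦(1 : ℤ)⟧')) = 0 := by
          rw [← Category.assoc, ← hψ'₁, Category.assoc, hz, comp_zero]
        obtain ⟨c, hc⟩ := ye₃ memA (α₂ ≫ (ρ' ≫ x⟦(1 : ℤ)⟧')) h1
        rw [hc, hA₁s c, comp_zero]
      obtain ⟨d, hd⟩ := ye₂ memE2 (ρ' ≫ x⟦(1 : ℤ)⟧') (by exact hy2)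
      have h4 : g ≫ (j ≫ d) = 0 := by
        rw [← Category.assoc, hψ'₂, Category.assoc, ← hd, hz]
      obtain ⟨e', he'⟩ := ye₃ mem (j ≫ d) h4
      obtain ⟨f'', hf''⟩ := ye₅ memA e' (by exact hA₁s _)
      have h7 : j ≫ (d - φ' ≫ f'') = 0 := by
        rw [Preadditive.comp_sub, ← Category.assoc, ← hφ', Category.assoc, ← hf'', ← he',
          sub_self]
      obtain ⟨c', hc'⟩ := ye₃ memB (d - φ' ≫ f'') h7
      have hdφ : d = φ' ≫ f'' := by
        rw [hB₁s c', comp_zero] at hc'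
        exact sub_eq_zero.mp hc'
      have hzz : ρ' ≫ x⟦(1 : ℤ)⟧' = 0 := by
        rw [hd, hdφ, ← Category.assoc, zc₂₃ memE2, zero_comp]
      obtain ⟨xt, hxt⟩ := ye₄ memE1 (x⟦(1 : ℤ)⟧') (by exact hzz)
      obtain ⟨g'', hg''⟩ := ye₅ memA (f⟦(1 : ℤ)⟧' ≫ xt)
        (by rw [← Category.assoc, ← Functor.map_comp]; exact hA₁s _)
      have h11 : j ≫ (φ' ≫ g'') = 0 := by
        rw [← Category.assoc, ← hφ', Category.assoc, ← hg'', ← Category.assoc, zc₃₁ mem,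
          zero_comp]
      obtain ⟨c₂, hc₂⟩ := ye₃ memB (φ' ≫ g'') h11
      have hφg : φ' ≫ g'' = 0 := by rw [hc₂, hB₁s c₂, comp_zero]
      obtain ⟨z₂, hz₂⟩ := ye₄ memE2 g'' (by exact hφg)
      have h12 : f⟦(1 : ℤ)⟧' ≫ (xt - ψ'⟦(1 : ℤ)⟧' ≫ z₂) = 0 := by
        rw [Preadditive.comp_sub, hg'', hz₂, ← Category.assoc, ← Functor.map_comp,
          ← Category.assoc, ← Functor.map_comp, hψ'₁, sub_self]
      obtain ⟨b', hb'⟩ := ye₅ mem (xt - ψ'⟦(1 : ℤ)⟧' ≫ z₂) (by exact h12)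
      obtain ⟨b₂', hb₂'⟩ := ye₅ memB b' (by exact hB₁s _)
      have hxt2 : xt = ψ'⟦(1 : ℤ)⟧' ≫ (z₂ + β₂⟦(1 : ℤ)⟧' ≫ b₂') := by
        have h15 : xt - ψ'⟦(1 : ℤ)⟧' ≫ z₂ = ψ'⟦(1 : ℤ)⟧' ≫ (β₂⟦(1 : ℤ)⟧' ≫ b₂') := by
          rw [hb', hb₂', ← Category.assoc, ← Functor.map_comp, hψ'₂, Functor.map_comp,
            Category.assoc]
        rw [Preadditive.comp_add]
        exact sub_eq_iff_eq_add'.mp h15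
      rw [hxt, hxt2, ← Category.assoc, ← Functor.map_comp, zc₁₂ memE1, Functor.map_zero,
        zero_comp]

end DecompLe

section Assembly

variable {S : Set C} {t : TStructure C}

lemma extClos_thick {G : Set C} (hG : ∀ X ∈ G, ThickClos S X) {X : C}
    (hX : ExtClos G X) : ThickClos S X := by
  induction hX with
  | of h => exact hG _ h
  | zero h => exact ThickClos.zero h
  | ext f g h mem _ _ ihA ihB => exact ThickClos.ext f g h mem ihA ihB

lemma gle_thick (a : ℤ) : ∀ X ∈ Gle S a, ThickClos S X := by
  rintro X ⟨P, hP, m, _, ⟨e⟩⟩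
  exact ThickClos.retract ⟨e.hom, e.inv, e.hom_inv_id⟩ (ThickClos.shift m (ThickClos.of hP))

lemma gge_thick (a : ℤ) : ∀ X ∈ Gge S a, ThickClos S X := by
  rintro X ⟨P, hP, m, _, ⟨e⟩⟩
  exact ThickClos.retract ⟨e.hom, e.inv, e.hom_inv_id⟩ (ThickClos.shift m (ThickClos.of hP))

lemma claimC3 (hTs : IsSiltingTStructureFor S t) :
    {Y : C | t.le (-1) Y} = rPerp (KarClos {X | ExtClos (Gle S 0) X}) := by
  ext Y
  constructor
  · intro hY X hX f
    obtain ⟨Z, hZ, hr⟩ := hX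
    exact NoHom.of_retract hr
      (extGle_mem_VV hZ Y (UU_mono (by omega) ((LE_iff (m := 1) hTs (by omega) Y).1 hY))) f
  · intro hY
    refine (LE_iff (m := 1) hTs (by omega) Y).2 ?_
    intro Q hQ τ hτ f
    exact hY (Q⟦τ⟧) ⟨Q⟦τ⟧, ExtClos.of ⟨Q, hQ, τ, by omega, ⟨Iso.refl _⟩⟩,
      𝟙 _, 𝟙 _, Category.id_comp _⟩ f

lemma claimC4 (hTs : IsSiltingTStructureFor S t) :
    {Y : C | t.ge 1 Y} = rPerp (KarClos {X | ExtClos (Gge S 0) X}) := by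
  ext Y
  constructor
  · intro hY X hX f
    obtain ⟨Z, hZ, hr⟩ := hX
    exact NoHom.of_retract hr (extGge_noHom hZ ((GE_iff (m := 0) hTs (by omega) Y).1 hY)) f
  · intro hY
    refine (GE_iff (m := 0) hTs (by omega) Y).2 ?_
    intro Q hQ τ hτ f
    exact hY (Q⟦τ⟧) ⟨Q⟦τ⟧, ExtClos.of ⟨Q, hQ, τ, by omega, ⟨Iso.refl _⟩⟩,
      𝟙 _, 𝟙 _, Category.id_comp _⟩ f

lemma claimC1 (hTs : IsSiltingTStructureFor S t) :
    KarClos {X | ExtClos (Gle S 0) X} =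
      lPerp {Y : C | t.le (-1) Y} ∩ {X | ThickClos S X} := by
  ext X
  constructor
  · intro hX
    obtain ⟨Z, hZ, hr⟩ := hX
    refine ⟨fun Y hY f => ?_, ThickClos.retract hr (extClos_thick (gle_thick 0) hZ)⟩
    exact NoHom.of_retract hr
      (extGle_mem_VV hZ Y (UU_mono (by omega) ((LE_iff (m := 1) hTs (by omega) Y).1 hY))) f
  · rintro ⟨hperp, hthick⟩
    obtain ⟨Z, hZ, i, r, hir⟩ := thick_retract_ext hthick
    obtain ⟨A, B, u, v, w, memT, hA, hB⟩ := decompGe hTs hZ 0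
    have hgv : i ≫ v = 0 := hperp B ((LE_iff (m := 1) hTs (by omega) B).2 (UU_mono (by omega) hB)) (i ≫ v)
    obtain ⟨s, hs⟩ := cye₂ memT i (by exact hgv)
    exact ⟨A, hA, s, u ≫ r, by rw [← Category.assoc, ← hs, hir]⟩

lemma claimC2 (hTs : IsSiltingTStructureFor S t) :
    KarClos {X | ExtClos (Gge S 0) X} =
      lPerp {Y : C | t.ge 1 Y} ∩ {X | ThickClos S X} := by
  ext X
  constructor
  · intro hX
    obtain ⟨Z, hZ, hr⟩ := hX
    refine ⟨fun Y hY f => ?_, ThickClos.retract hr (extClos_thick (gge_thick 0) hZ)⟩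
    exact NoHom.of_retract hr (extGge_noHom hZ ((GE_iff (m := 0) hTs (by omega) Y).1 hY)) f
  · rintro ⟨hperp, hthick⟩
    obtain ⟨A', B', hA', hB', f', g', h', memt⟩ := t.exists_triangle X 0 1 rfl
    have hg' : g' = 0 := hperp B' hB' g'
    obtain ⟨s0, hs0⟩ := Triangle.coyoneda_exact₂ _ memt (𝟙 X) (by exact (Category.id_comp g').trans hg')
    have hXU : X ∈ UU S 0 :=
      UU_retract ⟨s0, f', hs0.symm⟩ ((LE_iff (m := 0) hTs (by omega) A').1 hA')
    obtain ⟨Z, hZ, i, r, hir⟩ := thick_retract_ext hthick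
    obtain ⟨A, B, u, v, w, memT, hA, hB⟩ := decompLe hTs hZ 0
    have hur : u ≫ r = 0 := hA X hXU (u ≫ r)
    obtain ⟨g₂, hg₂⟩ := ye₂ memT r (by exact hur)
    exact ⟨B, hB, i ≫ v, g₂, by rw [Category.assoc, ← hg₂, hir]⟩

end Assembly

end Infra

/-- the weight structure induced by a silting collection on
`thick(S)` is w-t-strictly left orthogonal to the associated silting t-structure. -/
theorem silting_wt_strict_orthogonal [HasFiniteBiproducts C]
    (S : Set C) (t : TStructure C) (hS : IsSiltingCollection S t) :
    KarClos {X | ExtClos {X : C | ∃ P ∈ S, ∃ m : ℤ, m ≤ 0 ∧ Nonempty (X ≅ P⟦m⟧)} X} =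
        lPerp {Y : C | t.le (-1) Y} ∩ {X | ThickClos S X} ∧
    KarClos {X | ExtClos {X : C | ∃ P ∈ S, ∃ m : ℤ, 0 ≤ m ∧ Nonempty (X ≅ P⟦m⟧)} X} =
        lPerp {Y : C | t.ge 1 Y} ∩ {X | ThickClos S X} ∧
    {Y : C | t.le (-1) Y} =
      rPerp (KarClos {X | ExtClos {X : C | ∃ P ∈ S, ∃ m : ℤ, m ≤ 0 ∧ Nonempty (X ≅ P⟦m⟧)} X}) ∧
    {Y : C | t.ge 1 Y} =
      rPerp (KarClos {X | ExtClos {X : C | ∃ P ∈ S, ∃ m : ℤ, 0 ≤ m ∧ Nonempty (X ≅ P⟦m⟧)} X}) := by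
  exact ⟨claimC1 hS.tstr, claimC2 hS.tstr, claimC3 hS.tstr, claimC4 hS.tstr⟩

end Paper
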